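/- Let k = {((2 + cos 3θ)·cos θ, (2 + cos 3θ)·sin θ, sin 3θ) : 0 ≤ θ ≤ 2π} be the standard (1,3)-torus knot in ℝ³. Then for every integer n ≥ 0 the restriction of Wⁿ to k is injective and Wⁿ(k) = {((2 + cos 3θ)·cos(2ⁿθ), (2 + cos 3θ)·sin(2ⁿθ), sin 3θ) : 0 ≤ θ ≤ 2π}, the standard (2ⁿ,3)-torus knot; in particular k is iteratively injective with respect to W. -/

import Mathlib

open Set Real

/-- The ambient 3-space, `ℝ³`, modeled as `ℝ × ℝ × ℝ`. -/
abbrev E3 : Type := ℝ × ℝ × ℝ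

/-- The angle-doubling map `W` of `ℝ³`, determined by
`W(r cos θ, r sin θ, z) = (r cos 2θ, r sin 2θ, z)`. -/
noncomputable def Wmap : E3 → E3 := fun p =>
  if (p.1, p.2.1) = (0, 0) then p
  else ((p.1 ^ 2 - p.2.1 ^ 2) / Real.sqrt (p.1 ^ 2 + p.2.1 ^ 2),
        2 * p.1 * p.2.1 / Real.sqrt (p.1 ^ 2 + p.2.1 ^ 2),
        p.2.2)

/-- The standard `(a,3)`-torus curve `θ ↦ ((2+cos 3θ) cos aθ, (2+cos 3θ) sin aθ, sin 3θ)`. -/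
noncomputable def torusCurve (a : ℝ) : ℝ → E3 := fun θ =>
  ((2 + Real.cos (3 * θ)) * Real.cos (a * θ),
   (2 + Real.cos (3 * θ)) * Real.sin (a * θ),
   Real.sin (3 * θ))

lemma rpos (θ : ℝ) : 0 < 2 + Real.cos (3 * θ) := by
  have := Real.neg_one_le_cos (3 * θ); linarith

lemma Wmap_torusCurve (a θ : ℝ) : Wmap (torusCurve a θ) = torusCurve (2 * a) θ := by
  have hr := rpos θ
  set r := 2 + Real.cos (3 * θ) with hrdef
  have hx : (r * Real.cos (a * θ), r * Real.sin (a * θ)) ≠ ((0 : ℝ), 0) := by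
    intro h
    have h1 : r * Real.cos (a * θ) = 0 := congrArg Prod.fst h
    have h2 : r * Real.sin (a * θ) = 0 := congrArg Prod.snd h
    have hc : Real.cos (a * θ) = 0 := by
      rcases mul_eq_zero.1 h1 with h | h
      · linarith
      · exact h
    have hs : Real.sin (a * θ) = 0 := by
      rcases mul_eq_zero.1 h2 with h | h
      · linarith
      · exact h
    have := Real.sin_sq_add_cos_sq (a * θ)
    rw [hs, hc] at this; norm_num at this
  have hsum : (r * Real.cos (a * θ)) ^ 2 + (r * Real.sin (a * θ)) ^ 2 = r ^ 2 := by
    have := Real.sin_sq_add_cos_sq (a * θ); nlinarith [this]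
  have hsqrt : Real.sqrt ((r * Real.cos (a * θ)) ^ 2 + (r * Real.sin (a * θ)) ^ 2) = r := by
    rw [hsum]; exact Real.sqrt_sq hr.le
  unfold Wmap torusCurve
  rw [if_neg hx]
  dsimp only
  rw [hsqrt]
  have hc2 : Real.cos (2 * a * θ) = Real.cos (a * θ) ^ 2 - Real.sin (a * θ) ^ 2 := by
    rw [show 2 * a * θ = 2 * (a * θ) by ring, Real.cos_two_mul']
  have hs2 : Real.sin (2 * a * θ) = 2 * Real.sin (a * θ) * Real.cos (a * θ) := by
    rw [show 2 * a * θ = 2 * (a * θ) by ring, Real.sin_two_mul]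
  refine Prod.ext ?_ (Prod.ext ?_ rfl)
  · field_simp
    rw [show 2 * θ * a = 2 * a * θ by ring, hc2, show θ * a = a * θ by ring, hrdef]; ring
  · field_simp
    rw [show 2 * θ * a = 2 * a * θ by ring, hs2, show θ * a = a * θ by ring, hrdef]; ring

lemma iter_torus (n : ℕ) (θ : ℝ) :
    Wmap^[n] (torusCurve 1 θ) = torusCurve (2 ^ n) θ := by
  induction n with
  | zero => norm_num
  | succ n ih =>
    rw [Function.iterate_succ_apply', ih, Wmap_torusCurve]
    norm_num [pow_succ]
    ring_nf

lemma angle_eq {x y : ℝ} (hc : Real.cos x = Real.cos y) (hs : Real.sin x = Real.sin y) :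
    ∃ k : ℤ, (k : ℝ) * (2 * π) = x - y := by
  have : Real.cos (x - y) = 1 := by
    rw [Real.cos_sub, hc, hs]
    rw [← Real.sin_sq_add_cos_sq y]; ring
  exact (Real.cos_eq_one_iff _).1 this

/-- For the standard `(1,3)`-torus knot `k`, every iterate `Wⁿ` is injective on `k` and maps it
onto the standard `(2ⁿ,3)`-torus knot; in particular `k` is iteratively injective with respect
to `W`. -/
theorem Wmap_iterate_torus_knot :
    ∀ n : ℕ,
      Set.InjOn (Wmap^[n]) (torusCurve 1 '' Icc 0 (2 * π)) ∧
      Wmap^[n] '' (torusCurve 1 '' Icc 0 (2 * π)) =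
        torusCurve (2 ^ n) '' Icc 0 (2 * π) := by
  intro n
  constructor
  · rintro p ⟨θ₁, hθ₁, rfl⟩ q ⟨θ₂, hθ₂, rfl⟩ heq
    rw [iter_torus, iter_torus] at heq
    -- extract coordinate equalities
    have hr1 := rpos θ₁
    have hr2 := rpos θ₂
    have h1 : (2 + Real.cos (3 * θ₁)) * Real.cos ((2:ℝ) ^ n * θ₁)
        = (2 + Real.cos (3 * θ₂)) * Real.cos ((2:ℝ) ^ n * θ₂) := congrArg Prod.fst heq
    have h2 : (2 + Real.cos (3 * θ₁)) * Real.sin ((2:ℝ) ^ n * θ₁)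
        = (2 + Real.cos (3 * θ₂)) * Real.sin ((2:ℝ) ^ n * θ₂) :=
      congrArg Prod.fst (congrArg Prod.snd heq)
    have h3 : Real.sin (3 * θ₁) = Real.sin (3 * θ₂) :=
      congrArg Prod.snd (congrArg Prod.snd heq)
    -- radii agree
    have hrad : 2 + Real.cos (3 * θ₁) = 2 + Real.cos (3 * θ₂) := by
      have hsq : ((2 + Real.cos (3 * θ₁)))^2 = ((2 + Real.cos (3 * θ₂)))^2 := by
        have e1 := Real.sin_sq_add_cos_sq ((2:ℝ) ^ n * θ₁)
        have e2 := Real.sin_sq_add_cos_sq ((2:ℝ) ^ n * θ₂)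
        linear_combination (-(2 + Real.cos (3 * θ₁))^2) * e1 + ((2 + Real.cos (3 * θ₂))^2) * e2
          + ((2 + Real.cos (3 * θ₁)) * Real.cos ((2:ℝ) ^ n * θ₁)
             + (2 + Real.cos (3 * θ₂)) * Real.cos ((2:ℝ) ^ n * θ₂)) * h1
          + ((2 + Real.cos (3 * θ₁)) * Real.sin ((2:ℝ) ^ n * θ₁)
             + (2 + Real.cos (3 * θ₂)) * Real.sin ((2:ℝ) ^ n * θ₂)) * h2
      nlinarith [hsq, hr1, hr2]
    have hcos3 : Real.cos (3 * θ₁) = Real.cos (3 * θ₂) := by linarith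
    have hcosA : Real.cos ((2:ℝ) ^ n * θ₁) = Real.cos ((2:ℝ) ^ n * θ₂) := by
      have := h1; rw [hrad] at this
      exact mul_left_cancel₀ (ne_of_gt hr2) this
    have hsinA : Real.sin ((2:ℝ) ^ n * θ₁) = Real.sin ((2:ℝ) ^ n * θ₂) := by
      have := h2; rw [hrad] at this
      exact mul_left_cancel₀ (ne_of_gt hr2) this
    obtain ⟨k, hk⟩ := angle_eq hcos3 h3
    obtain ⟨m, hm⟩ := angle_eq hcosA hsinA
    -- 3(θ₁-θ₂) = 2πk, 2^n (θ₁-θ₂) = 2πm ⇒ 2^n k = 3 m ⇒ 3 ∣ k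
    have hπ : (π : ℝ) ≠ 0 := Real.pi_ne_zero
    have hk' : 3 * (θ₁ - θ₂) = (k : ℝ) * (2 * π) := by linarith [hk]
    have hm' : (2:ℝ) ^ n * (θ₁ - θ₂) = (m : ℝ) * (2 * π) := by
      have : (2:ℝ) ^ n * θ₁ - (2:ℝ) ^ n * θ₂ = (2:ℝ) ^ n * (θ₁ - θ₂) := by ring
      linarith [hm, this]
    have hkm : (2:ℝ) ^ n * (k : ℝ) = 3 * (m : ℝ) := by
      have h5 : (2:ℝ) ^ n * (3 * (θ₁ - θ₂)) = 3 * ((2:ℝ) ^ n * (θ₁ - θ₂)) := by ring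
      rw [hk', hm'] at h5
      have h2π : (2 * π : ℝ) ≠ 0 := by positivity
      have h6 : ((2:ℝ) ^ n * (k : ℝ)) * (2 * π) = (3 * (m : ℝ)) * (2 * π) := by
        linear_combination h5
      exact mul_right_cancel₀ h2π h6
    have hkmz : (2 : ℤ) ^ n * k = 3 * m := by
      exact_mod_cast by push_cast; exact_mod_cast hkm
    have h3dvd : (3 : ℤ) ∣ k := by
      have hdvd : (3 : ℤ) ∣ 2 ^ n * k := ⟨m, by linarith [hkmz]⟩
      have hp : Prime (3 : ℤ) := Int.prime_three
      rcases hp.dvd_mul.1 hdvd with h | h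
      · exfalso
        have := hp.dvd_of_dvd_pow h
        norm_num at this
      · exact h
    obtain ⟨j, rfl⟩ := h3dvd
    have hθ : θ₁ = θ₂ + (j : ℝ) * (2 * π) := by
      push_cast at hk'
      have : 3 * (θ₁ - θ₂) = 3 * ((j:ℝ) * (2 * π)) := by linarith [hk']
      have h6 := mul_left_cancel₀ (by norm_num : (3:ℝ) ≠ 0) this
      linarith
    subst hθ
    -- now show torusCurve 1 agrees by periodicity
    unfold torusCurve
    have e1 : Real.cos (3 * (θ₂ + (j:ℝ) * (2 * π))) = Real.cos (3 * θ₂) := by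
      rw [show 3 * (θ₂ + (j:ℝ) * (2 * π)) = 3 * θ₂ + (3*j : ℤ) * (2 * π) by push_cast; ring]
      exact Real.cos_add_int_mul_two_pi _ _
    have e2 : Real.sin (3 * (θ₂ + (j:ℝ) * (2 * π))) = Real.sin (3 * θ₂) := by
      rw [show 3 * (θ₂ + (j:ℝ) * (2 * π)) = 3 * θ₂ + (3*j : ℤ) * (2 * π) by push_cast; ring]
      exact Real.sin_add_int_mul_two_pi _ _
    have e3 : Real.cos (1 * (θ₂ + (j:ℝ) * (2 * π))) = Real.cos (1 * θ₂) := by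
      rw [show 1 * (θ₂ + (j:ℝ) * (2 * π)) = 1 * θ₂ + (j : ℤ) * (2 * π) by push_cast; ring]
      exact Real.cos_add_int_mul_two_pi _ _
    have e4 : Real.sin (1 * (θ₂ + (j:ℝ) * (2 * π))) = Real.sin (1 * θ₂) := by
      rw [show 1 * (θ₂ + (j:ℝ) * (2 * π)) = 1 * θ₂ + (j : ℤ) * (2 * π) by push_cast; ring]
      exact Real.sin_add_int_mul_two_pi _ _
    rw [e1, e2, e3, e4]
  · have hfun : (Wmap^[n] ∘ torusCurve 1) = torusCurve ((2:ℝ) ^ n) := funext (iter_torus n)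
    rw [← Set.image_comp, hfun]
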